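/- arXiv:1709.08356 — 4 statements merged into one kernel-verified Lean document; each statement's English description precedes it below -/
import Mathlib

section
/- Let n ≥ 0 be an integer and K a totally real number field of degree 2^n over ℚ such that: (i) 2 is totally ramified in K; (ii) the class number of K is 1 and every totally positive unit of O_K is a square in O_K (equivalently, the narrow class number of K is 1). Then K is isomorphic to ℚ(μ_{2^{n+2}})⁺, the maximal totally real subfield of the cyclotomic field of 2^{n+2}-th roots of unity, i.e. K ≅ ℚ(ζ + ζ⁻¹) where ζ is a primitive 2^{n+2}-th root of unity. -/
open NumberField Polynomial IntermediateField


/-- The tower polynomials: `P 0 = X`, `P (k+1) = P k ∘ (X² - 2)`. -/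
noncomputable def krausP (k : ℕ) : Polynomial ℤ :=
  Nat.rec X (fun _ p => p.comp (X ^ 2 - C 2)) k

lemma krausP_zero : krausP 0 = X := rfl

lemma krausP_succ (k : ℕ) : krausP (k + 1) = (krausP k).comp (X ^ 2 - C 2) := rfl

lemma krausP_monic (k : ℕ) : (krausP k).Monic := by
  induction k with
  | zero => exact monic_X
  | succ k ih =>
    exact ih.comp (monic_X_pow_sub_C 2 (by norm_num)) (by
      rw [natDegree_X_pow_sub_C]; norm_num)

lemma krausP_natDegree (k : ℕ) : (krausP k).natDegree = 2 ^ k := by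
  induction k with
  | zero => simp [krausP_zero]
  | succ k ih =>
    rw [krausP_succ, natDegree_comp, ih, natDegree_X_pow_sub_C, pow_succ]

lemma krausP_aeval_succ {R : Type*} [CommRing R] (k : ℕ) (x : R) :
    aeval x (krausP (k+1)) = aeval (x ^ 2 - 2) (krausP k) := by
  rw [krausP_succ, aeval_comp]
  congr 1
  simp only [map_sub, map_pow, aeval_X, aeval_C]
  norm_num

lemma krausP_aeval_two {R : Type*} [CommRing R] (k : ℕ) : aeval (2 : R) (krausP k) = 2 := by
  induction k with
  | zero => simp [krausP_zero]
  | succ k ih => rw [krausP_aeval_succ]; norm_num [ih]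

lemma krausP_aeval_neg_two {R : Type*} [CommRing R] (k : ℕ) (hk : 1 ≤ k) :
    aeval (-2 : R) (krausP k) = 2 := by
  obtain ⟨j, rfl⟩ := Nat.exists_eq_add_of_le' hk
  rw [krausP_aeval_succ]
  norm_num [krausP_aeval_two]

lemma krausP_map_zmod2 (k : ℕ) :
    (krausP k).map (Int.castRingHom (ZMod 2)) = X ^ (2 ^ k) := by
  induction k with
  | zero => simp [krausP_zero]
  | succ k ih =>
    rw [krausP_succ, Polynomial.map_comp, ih]
    have h2 : ((X ^ 2 - C 2 : ℤ[X]).map (Int.castRingHom (ZMod 2))) = X ^ 2 := by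
      simp only [Polynomial.map_sub, Polynomial.map_pow, map_X, map_C]
      have h0 : ((Int.castRingHom (ZMod 2)) 2) = 0 := by decide
      rw [h0]
      simp
    rw [h2, X_pow_comp, ← pow_mul, pow_succ, Nat.mul_comm]

lemma krausP_irreducible_int (k : ℕ) (hk : 1 ≤ k) : Irreducible (krausP k) := by
  have heis : (krausP k).IsEisensteinAt (Ideal.span {(2 : ℤ)}) := by
    constructor
    · rw [(krausP_monic k).leadingCoeff, Ideal.mem_span_singleton]
      norm_num
    · intro i hi
      rw [krausP_natDegree] at hi
      have : ((krausP k).coeff i : ZMod 2) = 0 := by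
        have := congrArg (fun p => Polynomial.coeff p i) (krausP_map_zmod2 k)
        simp only [coeff_map] at this
        rw [show ((Int.castRingHom (ZMod 2)) ((krausP k).coeff i)) = (((krausP k).coeff i : ZMod 2)) from rfl] at this
        rw [this, coeff_X_pow, if_neg (Nat.ne_of_lt hi)]
      rw [Ideal.mem_span_singleton]
      exact_mod_cast (ZMod.intCast_zmod_eq_zero_iff_dvd _ 2).mp this
    · have hc : (krausP k).coeff 0 = aeval (0 : ℤ) (krausP k) := by
        rw [coeff_zero_eq_eval_zero]
        simp [aeval_def, eval₂_eq_eval_map]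
      have hval : aeval (0 : ℤ) (krausP k) = 2 ∨ aeval (0 : ℤ) (krausP k) = -2 := by
        obtain ⟨j, rfl⟩ := Nat.exists_eq_add_of_le' hk
        rw [krausP_aeval_succ]
        norm_num
        rcases Nat.eq_zero_or_pos j with hj | hj
        · subst hj; right; simp [krausP_zero]
        · left; exact krausP_aeval_neg_two j hj
      rw [hc, Ideal.span_singleton_pow, Ideal.mem_span_singleton]
      rcases hval with h | h <;> rw [h] <;> norm_num
  exact heis.irreducible ((Ideal.span_singleton_prime (by norm_num)).mpr Int.prime_two) (krausP_monic k).isPrimitive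
    (by rw [krausP_natDegree]; positivity)

lemma krausP_irreducible_rat (k : ℕ) :
    Irreducible ((krausP k).map (Int.castRingHom ℚ)) := by
  rcases Nat.eq_zero_or_pos k with hk | hk
  · subst hk; simpa [krausP_zero] using irreducible_X (R := ℚ)
  · exact (Polynomial.IsPrimitive.Int.irreducible_iff_irreducible_map_cast (krausP_monic k).isPrimitive).mp
      (krausP_irreducible_int k hk)

lemma krausP_real_ge (k : ℕ) : ∀ x : ℝ, 2 ≤ x → 2 ≤ aeval x (krausP k) := by
  induction k with
  | zero => intro x hx; simpa [krausP_zero] using hx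
  | succ k ih =>
    intro x hx
    rw [krausP_aeval_succ]
    exact ih _ (by nlinarith)

lemma krausP_real_root_bounds (k : ℕ) (x : ℝ) (hx : aeval x (krausP k) = 0) :
    -2 < x ∧ x < 2 := by
  constructor
  · by_contra h
    push_neg at h
    rcases Nat.eq_zero_or_pos k with hk | hk
    · subst hk
      simp [krausP_zero] at hx
      linarith
    · obtain ⟨j, rfl⟩ := Nat.exists_eq_add_of_le' hk
      rw [krausP_aeval_succ] at hx
      have := krausP_real_ge j (x ^ 2 - 2) (by nlinarith)
      linarith
  · by_contra h
    push_neg at h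
    have := krausP_real_ge k x h
    linarith

lemma krausP_root_of_pow_eq_neg_one {L : Type*} [Field L] :
    ∀ (k : ℕ) (z : L), z ≠ 0 → z ^ (2 ^ (k + 1)) = -1 →
      aeval (z + z⁻¹) (krausP k) = 0 := by
  intro k
  induction k with
  | zero =>
    intro z hz h
    have h2 : z ^ 2 = -1 := by simpa using h
    have hinv : z⁻¹ = -z :=
      inv_eq_of_mul_eq_one_right (by linear_combination -h2)
    rw [hinv]
    simp [krausP_zero]
  | succ k ih =>
    intro z hz h
    rw [krausP_aeval_succ]
    have hsq : (z + z⁻¹) ^ 2 - 2 = z ^ 2 + (z ^ 2)⁻¹ := by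
      field_simp
      ring
    rw [hsq]
    refine ih (z ^ 2) (pow_ne_zero 2 hz) ?_
    rw [← pow_mul]
    rw [show 2 * 2 ^ (k + 1) = 2 ^ (k + 1 + 1) by ring]
    exact h

lemma kraus_chain (K : Type*) [Field K] [NumberField K] (n : ℕ)
    (𝓛 : Ideal (𝓞 K)) (hram : Ideal.span {(2 : 𝓞 K)} = 𝓛 ^ (2 ^ n))
    (hPID : IsPrincipalIdealRing (𝓞 K))
    (hpos : ∀ u : (𝓞 K)ˣ,
      (∀ σ : K →+* ℝ, 0 < σ (algebraMap (𝓞 K) K u)) → ∃ w : 𝓞 K, (u : 𝓞 K) = w ^ 2) :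
    ∀ k, k ≤ n → ∃ a : 𝓞 K, aeval a (krausP k) = 0 ∧
      Ideal.span {2 + a} = 𝓛 ^ (2 ^ (n - k)) ∧
      Ideal.span {2 - a} = 𝓛 ^ (2 ^ (n - k)) := by
  -- basic facts
  have h2K : (2 : 𝓞 K) ≠ 0 := two_ne_zero
  have hL0 : 𝓛 ≠ 0 := by
    intro h
    rw [h] at hram
    rw [zero_pow (by positivity)] at hram
    exact h2K (by simpa [Ideal.span_singleton_eq_bot] using hram)
  obtain ⟨π, hπ⟩ := (hPID.principal 𝓛).principal
  rw [Ideal.submodule_span_eq] at hπ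
  have hπ0 : π ≠ 0 := by
    rintro rfl
    exact hL0 (hπ.trans (Ideal.span_singleton_eq_bot.mpr rfl))
  intro k
  induction k with
  | zero =>
    intro _
    refine ⟨0, by simp [krausP_zero], ?_, ?_⟩ <;> simpa using hram
  | succ k ih =>
    intro hk1
    obtain ⟨a, hroot, hplus, hminus⟩ := ih (le_of_lt hk1)
    set m : ℕ := 2 ^ (n - (k + 1)) with hm
    have hm2 : 2 ^ (n - k) = m * 2 := by
      rw [hm, ← pow_succ]
      congr 1
      omega
    -- get the unit u with π ^ (m * 2) * u = 2 + a
    have hassoc : Associated (π ^ (m * 2)) (2 + a) := by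
      rw [← Ideal.span_singleton_eq_span_singleton, ← Ideal.span_singleton_pow, ← hπ,
        hplus, hm2]
    obtain ⟨u, hu⟩ := hassoc
    -- real embeddings of elements of 𝓞 K
    have hreal : ∀ σ : K →+* ℝ, -2 < (σ.comp (algebraMap (𝓞 K) K)) a ∧
        (σ.comp (algebraMap (𝓞 K) K)) a < 2 := by
      intro σ
      refine krausP_real_root_bounds k _ ?_
      have := Polynomial.aeval_algHom_apply
        ((σ.comp (algebraMap (𝓞 K) K)).toIntAlgHom) a (krausP k)
      simpa [hroot] using this
    -- u is totally positive
    have hupos : ∀ σ : K →+* ℝ, 0 < σ (algebraMap (𝓞 K) K u) := by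
      intro σ
      set f := σ.comp (algebraMap (𝓞 K) K) with hf
      have hfinj : Function.Injective f :=
        σ.injective.comp (IsFractionRing.injective (𝓞 K) K)
      have hfa := hreal σ
      have h1 : 0 < f (2 + a) := by
        rw [map_add, map_ofNat]
        linarith [hfa.1]
      have h2 : f (π ^ (m * 2)) = (f π ^ m) ^ 2 := by
        rw [map_pow, ← pow_mul]
      have hfπ : f π ≠ 0 := fun h => hπ0 (hfinj (by simpa using h))
      have h3 : 0 < (f π ^ m) ^ 2 := pow_two_pos_of_ne_zero (pow_ne_zero _ hfπ)
      have h4 : f (π ^ (m * 2)) * f (↑u) = f (2 + a) := by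
        rw [← map_mul, hu]
      have : 0 < f (↑u) := by nlinarith [h4, h1, h3, h2]
      simpa [hf] using this
    obtain ⟨w, hw⟩ := hpos u hupos
    set b : 𝓞 K := w * π ^ m with hbdef
    have hb2 : b ^ 2 = 2 + a := by
      have : b ^ 2 = π ^ (m * 2) * (u : 𝓞 K) := by
        rw [hbdef, mul_pow, ← pow_mul, hw]
        ring
      rw [this, hu]
    -- w is a unit
    have hwu : IsUnit w := isUnit_of_dvd_unit ⟨w, by rw [hw]; ring⟩ u.isUnit
    have hspanb : Ideal.span {b} = 𝓛 ^ m := by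
      have : Associated (π ^ m) b := ⟨hwu.unit, by rw [hbdef]; simp [mul_comm]⟩
      rw [← Ideal.span_singleton_eq_span_singleton.mpr this, ← Ideal.span_singleton_pow, ← hπ]
    -- memberships
    have h2m : (2 : 𝓞 K) ∈ 𝓛 ^ m := by
      have h2mem : (2 : 𝓞 K) ∈ Ideal.span {(2 : 𝓞 K)} := Ideal.mem_span_singleton_self _
      rw [hram] at h2mem
      exact Ideal.pow_le_pow_right (by
        exact Nat.pow_le_pow_right (by norm_num) (Nat.sub_le n (k + 1))) h2mem
    have hbm : b ∈ 𝓛 ^ m := by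
      rw [← hspanb]; exact Ideal.mem_span_singleton_self _
    have hple : Ideal.span {2 + b} ≤ 𝓛 ^ m := by
      rw [Ideal.span_le, Set.singleton_subset_iff]
      exact add_mem h2m hbm
    have hmle : Ideal.span {2 - b} ≤ 𝓛 ^ m := by
      rw [Ideal.span_le, Set.singleton_subset_iff]
      exact sub_mem h2m hbm
    obtain ⟨I, hI⟩ := (Ideal.dvd_iff_le.mpr hple)
    obtain ⟨J, hJ⟩ := (Ideal.dvd_iff_le.mpr hmle)
    have hprod : Ideal.span {2 + b} * Ideal.span {2 - b} = 𝓛 ^ (m * 2) := by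
      rw [Ideal.span_singleton_mul_span_singleton,
        show (2 + b) * (2 - b) = 2 - a by linear_combination -hb2, hminus, hm2]
    have hne : (𝓛 ^ (m * 2) : Ideal (𝓞 K)) ≠ 0 := pow_ne_zero _ hL0
    have hIJ : I * J = ⊤ := by
      have hcalc : 𝓛 ^ (m * 2) * (I * J) = 𝓛 ^ (m * 2) * ⊤ := by
        rw [Ideal.mul_top]
        conv_rhs => rw [← hprod, hI, hJ]
        rw [pow_mul]
        ring
      exact mul_left_cancel₀ hne hcalc
    have hItop : I = ⊤ := top_le_iff.mp (hIJ ▸ Ideal.mul_le_left)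
    have hJtop : J = ⊤ := top_le_iff.mp (hIJ ▸ Ideal.mul_le_right)
    refine ⟨b, ?_, ?_, ?_⟩
    · rw [krausP_aeval_succ, show b ^ 2 - 2 = a by linear_combination hb2, hroot]
    · rw [hI, hItop, Ideal.mul_top]
    · rw [hJ, hJtop, Ideal.mul_top]


/-- **Theorem 5 of Kraus' paper.**
Let `n ≥ 0` and let `K` be a totally real number field of degree `2 ^ n` over `ℚ` such
that `2` is totally ramified in `K`, the class number of `K` is `1` and every totally
positive unit of `𝓞 K` is a square (i.e. the narrow class number of `K` is `1`).  Then
`K` is isomorphic to `ℚ(μ_{2^{n+2}})⁺ = ℚ(ζ + ζ⁻¹)`, the maximal totally real subfield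
of the cyclotomic field of `2 ^ (n + 2)`-th roots of unity. -/
theorem eq_maximal_real_subfield_of_two_totally_ramified_of_narrow_class_number_one
    (n : ℕ) (K : Type*) [Field K] [NumberField K]
    (htotreal : ∀ φ : K →+* ℂ, ∀ x : K, (φ x).im = 0)
    (hdeg : Module.finrank ℚ K = 2 ^ n)
    (𝓛 : Ideal (𝓞 K)) (h𝓛 : 𝓛.IsMaximal)
    (hram : Ideal.span {(2 : 𝓞 K)} = 𝓛 ^ (2 ^ n))
    (hclass : NumberField.classNumber K = 1)
    (hpos : ∀ u : (𝓞 K)ˣ,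
      (∀ σ : K →+* ℝ, 0 < σ (algebraMap (𝓞 K) K u)) → ∃ w : 𝓞 K, (u : 𝓞 K) = w ^ 2) :
    ∀ ζ : CyclotomicField (2 ^ (n + 2) : ℕ+) ℚ, IsPrimitiveRoot ζ (2 ^ (n + 2)) →
      Nonempty (K ≃+* (Algebra.adjoin ℚ {ζ + ζ⁻¹} :
        Subalgebra ℚ (CyclotomicField (2 ^ (n + 2) : ℕ+) ℚ))) := by
  intro ζ hζ
  set Pq : ℚ[X] := (krausP n).map (Int.castRingHom ℚ) with hPq
  have hPmonic : Pq.Monic := (krausP_monic n).map _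
  have hPirr : Irreducible Pq := krausP_irreducible_rat n
  have hPdeg : Pq.natDegree = 2 ^ n := by
    rw [hPq, (krausP_monic n).natDegree_map, krausP_natDegree]
  have hcast : (Int.castRingHom ℚ) = algebraMap ℤ ℚ := by
    ext x; simp
  -- K side: a root of `krausP n` in `𝓞 K`
  have hPID : IsPrincipalIdealRing (𝓞 K) := NumberField.classNumber_eq_one_iff.mp hclass
  obtain ⟨a, haroot, -, -⟩ := kraus_chain K n 𝓛 hram hPID hpos n le_rfl
  set α : K := algebraMap (𝓞 K) K a with hα
  have hαroot : aeval α Pq = 0 := by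
    rw [hPq, hcast, aeval_map_algebraMap, hα]
    have h := Polynomial.aeval_algHom_apply ((algebraMap (𝓞 K) K).toIntAlgHom) a (krausP n)
    rw [show (algebraMap (𝓞 K) K) a = ((algebraMap (𝓞 K) K).toIntAlgHom) a from rfl, h,
      haroot, map_zero]
  have hint : IsIntegral ℚ α := ⟨Pq, hPmonic, by rwa [aeval_def] at hαroot⟩
  have hmin : minpoly ℚ α = Pq := (minpoly.eq_of_irreducible_of_monic hPirr hαroot hPmonic).symm
  have htop : ℚ⟮α⟯ = ⊤ := by
    have h1 : Module.finrank ℚ ℚ⟮α⟯ = Module.finrank ℚ K := by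
      rw [IntermediateField.adjoin.finrank hint, hmin, hPdeg, hdeg]
    have h2 : ℚ⟮α⟯.toSubmodule = ⊤ := Submodule.eq_top_of_finrank_eq h1
    rw [eq_top_iff]
    intro x _
    exact (h2.ge Submodule.mem_top : x ∈ ℚ⟮α⟯.toSubmodule)
  -- cyclotomic side
  set β : CyclotomicField (2 ^ (n + 2) : ℕ+) ℚ := ζ + ζ⁻¹ with hβ
  have hζ0 : ζ ≠ 0 := hζ.ne_zero (by positivity)
  have hζ2 : ζ ^ (2 ^ (n + 1)) = -1 := by
    set y : CyclotomicField (2 ^ (n + 2) : ℕ+) ℚ := ζ ^ (2 ^ (n + 1)) with hy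
    have hy2 : y ^ 2 = 1 := by
      rw [hy, ← pow_mul, ← pow_succ]
      exact hζ.pow_eq_one
    have hyne : y ≠ 1 := by
      intro h
      rw [hy] at h
      have hdvd : 2 ^ (n + 2) ∣ 2 ^ (n + 1) := hζ.dvd_of_pow_eq_one _ h
      have := Nat.le_of_dvd (by positivity) hdvd
      have h2 : (2 : ℕ) ^ (n + 1) < 2 ^ (n + 2) := Nat.pow_lt_pow_right (by norm_num) (by omega)
      omega
    have : (y - 1) * (y + 1) = 0 := by linear_combination hy2
    rcases mul_eq_zero.mp this with h | h
    · exact absurd (by linear_combination h) hyne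
    · rw [hy] at h ⊢
      linear_combination h
  have hβroot : aeval β Pq = 0 := by
    rw [hPq, hcast, aeval_map_algebraMap]
    exact krausP_root_of_pow_eq_neg_one n ζ hζ0 hζ2
  have hβint : IsIntegral ℚ β := ⟨Pq, hPmonic, by rwa [aeval_def] at hβroot⟩
  have hminβ : minpoly ℚ β = Pq := (minpoly.eq_of_irreducible_of_monic hPirr hβroot hPmonic).symm
  -- assemble the isomorphism
  have e1 : K ≃ₐ[ℚ] ℚ⟮α⟯ :=
    IntermediateField.topEquiv.symm.trans (IntermediateField.equivOfEq htop.symm)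
  have e2 : ℚ⟮α⟯ ≃ₐ[ℚ] AdjoinRoot Pq := (hmin ▸ (adjoinRootEquivAdjoin ℚ hint)).symm
  have e3 : AdjoinRoot Pq ≃ₐ[ℚ] ℚ⟮β⟯ := hminβ ▸ (adjoinRootEquivAdjoin ℚ hβint)
  have e4 : ℚ⟮β⟯ ≃ₐ[ℚ] (Algebra.adjoin ℚ {β} : Subalgebra ℚ (CyclotomicField (2 ^ (n + 2) : ℕ+) ℚ)) :=
    Subalgebra.equivOfEq _ _ (IntermediateField.adjoin_simple_toSubalgebra_of_isAlgebraic hβint.isAlgebraic)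
  exact ⟨(e1.trans (e2.trans (e3.trans e4))).toRingEquiv⟩
end

section
/- Let K be a totally real number field of degree d over ℚ in which 2 is totally ramified, and set G = (O_K/4O_K)ˣ. Then the quotient group G/G² has order 2^d, where G² denotes the subgroup of squares of G. -/
open NumberField IsDedekindDomain

theorem aux_card_quot_range {G : Type*} [CommGroup G] [Finite G] (f : G →* G) :
    Nat.card (G ⧸ f.range) = Nat.card f.ker := by
  have h1 := Subgroup.card_eq_card_quotient_mul_card_subgroup f.range
  have h2 := Subgroup.card_eq_card_quotient_mul_card_subgroup f.ker
  have h3 : Nat.card (G ⧸ f.ker) = Nat.card f.range :=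
    Nat.card_congr (QuotientGroup.quotientKerEquivRange f).toEquiv
  have hpos : 0 < Nat.card f.range := Nat.card_pos
  rw [h3] at h2
  rw [h2] at h1
  exact (Nat.eq_of_mul_eq_mul_left hpos (h1.trans (mul_comm _ _))).symm

theorem aux_sq_one_mem {R : Type*} [CommRing R] [IsDedekindDomain R]
    (𝓛 : Ideal R) (h𝓛 : 𝓛.IsMaximal) (hbot : 𝓛 ≠ ⊥) (d : ℕ)
    (hram : Ideal.span {(2 : R)} = 𝓛 ^ d)
    (x : R) (hx : x * x - 1 ∈ 𝓛 ^ (2 * d)) : x - 1 ∈ 𝓛 ^ d := by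
  set v : HeightOneSpectrum R := ⟨𝓛, h𝓛.isPrime, hbot⟩ with hv
  have key : ∀ (y : R) (n : ℕ), y ∈ 𝓛 ^ n ↔
      v.intValuation y ≤ Multiplicative.ofAdd (-(n : ℤ)) := by
    intro y n
    change y ∈ 𝓛 ^ n ↔ v.intValuation y ≤ WithZero.exp (-(n : ℤ))
    rw [HeightOneSpectrum.intValuation_le_pow_iff_dvd, Ideal.dvd_span_singleton]
  rw [key]
  have h2 : v.intValuation 2 ≤ Multiplicative.ofAdd (-(d : ℤ)) := by
    rw [← key]
    exact hram ▸ Ideal.mem_span_singleton_self 2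
  have hprod : v.intValuation (x - 1) * v.intValuation (x + 1) ≤
      Multiplicative.ofAdd (-(d : ℤ)) * Multiplicative.ofAdd (-(d : ℤ)) := by
    have h1 : (x - 1) * (x + 1) ∈ 𝓛 ^ (2 * d) := by
      have : (x - 1) * (x + 1) = x * x - 1 := by ring
      rw [this]; exact hx
    rw [key] at h1
    rw [← map_mul]
    refine le_trans h1 ?_
    rw [← WithZero.coe_mul, WithZero.coe_le_coe, ← ofAdd_add]
    simp [two_mul]
  by_contra hcon
  push_neg at hcon
  have h2' : v.intValuation 2 < v.intValuation (x - 1) := lt_of_le_of_lt h2 hcon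
  have hadd : v.intValuation (x + 1) = v.intValuation (x - 1) := by
    have : x + 1 = (x - 1) + 2 := by ring
    rw [this, Valuation.map_add_eq_of_lt_left _ h2']
  rw [hadd] at hprod
  exact absurd hprod (not_le_of_gt (mul_lt_mul'' hcon hcon zero_le' zero_le'))

set_option maxHeartbeats 1000000 in
set_option synthInstance.maxHeartbeats 1000000 in
/-- **Lemma 18 of Kraus' paper.**
Let `K` be a totally real number field of degree `d` over `ℚ` in which `2` is totally
ramified, and let `G = (𝓞 K / 4𝓞 K)ˣ`.  Then the quotient of `G` by its subgroup `G²`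
of squares has order `2 ^ d`. -/
theorem card_units_quotient_four_mod_squares
    (K : Type*) [Field K] [NumberField K]
    (htotreal : ∀ φ : K →+* ℂ, ∀ x : K, (φ x).im = 0)
    (d : ℕ) (hd : d = Module.finrank ℚ K)
    (𝓛 : Ideal (𝓞 K)) (h𝓛 : 𝓛.IsMaximal)
    (hram : Ideal.span {(2 : 𝓞 K)} = 𝓛 ^ d) :
    Nat.card
      (((𝓞 K) ⧸ Ideal.span {(4 : 𝓞 K)})ˣ ⧸
        (powMonoidHom 2 : ((𝓞 K) ⧸ Ideal.span {(4 : 𝓞 K)})ˣ →*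
          ((𝓞 K) ⧸ Ideal.span {(4 : 𝓞 K)})ˣ).range) = 2 ^ d := by
  have hd1 : 0 < d := hd ▸ Module.finrank_pos
  set I : Ideal (𝓞 K) := Ideal.span {(4 : 𝓞 K)} with hI
  have h4 : I = 𝓛 ^ (2 * d) := by
    have : (4 : 𝓞 K) = 2 * 2 := by norm_num
    rw [hI, this, ← Ideal.span_singleton_mul_span_singleton, hram, ← pow_add, two_mul]
  have h4ne : (4 : 𝓞 K) ≠ 0 := by
    have : ((4 : ℕ) : 𝓞 K) ≠ 0 := Nat.cast_ne_zero.mpr (by norm_num)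
    simpa using this
  have hIbot : I ≠ ⊥ := by
    rw [hI, Ne, Ideal.span_singleton_eq_bot]; exact h4ne
  letI : Fintype ((𝓞 K) ⧸ I) := @Fintype.ofFinite _ (Ideal.finiteQuotientOfFreeOfNeBot I hIbot)
  haveI hQfin : Finite ((𝓞 K) ⧸ I) := Finite.of_fintype _
  haveI hQufin : Finite ((𝓞 K) ⧸ I)ˣ :=
    Finite.of_injective (fun u : ((𝓞 K) ⧸ I)ˣ => (u : (𝓞 K) ⧸ I)) Units.val_injective
  have h2memd : (2 : 𝓞 K) ∈ 𝓛 ^ d := hram ▸ Ideal.mem_span_singleton_self 2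
  have h𝓛bot : 𝓛 ≠ ⊥ := by
    intro hb
    have h2mem : (2 : 𝓞 K) ∈ 𝓛 := Ideal.pow_le_self hd1.ne' h2memd
    rw [hb] at h2mem
    exact two_ne_zero (Ideal.mem_bot.mp h2mem)
  have h4' : I = 𝓛 ^ d * 𝓛 ^ d := by rw [h4, two_mul, pow_add]
  set f : ((𝓞 K) ⧸ I)ˣ →* ((𝓞 K) ⧸ I)ˣ := powMonoidHom 2 with hf
  rw [aux_card_quot_range f]
  set J' : Ideal ((𝓞 K) ⧸ I) := (𝓛 ^ d).map (Ideal.Quotient.mk I) with hJ'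
  -- squares of 1 + J' elements are 1
  have hJsq : ∀ t : (𝓞 K) ⧸ I, t ∈ J' → ((1 : (𝓞 K) ⧸ I) + t) * (1 + t) = 1 := by
    intro t ht
    obtain ⟨s, hs, rfl⟩ :=
      (Ideal.mem_map_iff_of_surjective _ Ideal.Quotient.mk_surjective).mp ht
    have hmem : 2 * s + s * s ∈ I := by
      rw [h4']
      exact add_mem (Ideal.mul_mem_mul h2memd hs) (Ideal.mul_mem_mul hs hs)
    have hz : Ideal.Quotient.mk I (2 * s + s * s) = 0 :=
      (Ideal.Quotient.eq_zero_iff_mem).mpr hmem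
    have : (1 + Ideal.Quotient.mk I s) * (1 + Ideal.Quotient.mk I s)
        = 1 + Ideal.Quotient.mk I (2 * s + s * s) := by
      rw [map_add, map_mul, map_mul, map_ofNat]
      ring
    rw [this, hz, add_zero]
  -- the bijection between J' and the kernel of squaring
  have hker : ∀ u : ((𝓞 K) ⧸ I)ˣ, u ∈ f.ker ↔ (u : (𝓞 K) ⧸ I) * u = 1 := by
    intro u
    rw [MonoidHom.mem_ker, hf, powMonoidHom_apply, Units.ext_iff]
    rw [Units.val_pow_eq_pow_val, Units.val_one, sq]
  let F : J' → f.ker := fun t =>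
    ⟨⟨1 + t.1, 1 + t.1, hJsq t.1 t.2, hJsq t.1 t.2⟩, (hker _).mpr (hJsq t.1 t.2)⟩
  have hbij : Function.Bijective F := by
    constructor
    · intro t₁ t₂ h
      have h1 : (1 : (𝓞 K) ⧸ I) + t₁.1 = 1 + t₂.1 :=
        congrArg Units.val (Subtype.ext_iff.mp h)
      exact Subtype.ext (add_left_cancel h1)
    · rintro ⟨u, hu⟩
      rw [hker u] at hu
      obtain ⟨x, hx⟩ := Ideal.Quotient.mk_surjective (u : (𝓞 K) ⧸ I)
      have hxx : x * x - 1 ∈ 𝓛 ^ (2 * d) := by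
        rw [← h4, ← Ideal.Quotient.eq_zero_iff_mem, map_sub, map_mul, map_one, hx, hu,
          sub_self]
      have hx1 : x - 1 ∈ 𝓛 ^ d :=
        aux_sq_one_mem 𝓛 h𝓛 h𝓛bot d hram x hxx
      refine ⟨⟨(u : (𝓞 K) ⧸ I) - 1, ?_⟩, ?_⟩
      · rw [← hx]
        have : Ideal.Quotient.mk I x - 1 = Ideal.Quotient.mk I (x - 1) := by
          rw [map_sub, map_one]
        rw [this]
        exact Ideal.mem_map_of_mem _ hx1
      · apply Subtype.ext
        apply Units.ext
        show (1 : (𝓞 K) ⧸ I) + ((u : (𝓞 K) ⧸ I) - 1) = (u : (𝓞 K) ⧸ I)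
        ring
  rw [← Nat.card_eq_of_bijective F hbij]
  -- now count J'
  have habs2 : Ideal.absNorm (Ideal.span {(2 : 𝓞 K)}) = 2 ^ d := by
    rw [Ideal.absNorm_span_singleton]
    have h2alg : (2 : 𝓞 K) = algebraMap ℤ (𝓞 K) 2 := by simp
    have b := Module.Free.chooseBasis ℤ (𝓞 K)
    have hcard : Fintype.card (Module.Free.ChooseBasisIndex ℤ (𝓞 K)) = d := by
      rw [← Module.finrank_eq_card_chooseBasisIndex, RingOfIntegers.rank, hd]
    rw [h2alg, Algebra.norm_algebraMap_of_basis b, hcard, Int.natAbs_pow]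
    rfl
  have habsL : Ideal.absNorm 𝓛 = 2 := by
    have h1 : Ideal.absNorm 𝓛 ^ d = 2 ^ d := by
      rw [← map_pow, ← hram, habs2]
    exact Nat.pow_left_injective hd1.ne' h1
  have hcardQ : Nat.card ((𝓞 K) ⧸ I) = 2 ^ (2 * d) := by
    have h := Ideal.absNorm_apply I
    rw [Submodule.cardQuot_apply] at h
    rw [← h, h4, map_pow, habsL]
  have hquot : Nat.card (((𝓞 K) ⧸ I) ⧸ J') = 2 ^ d := by
    have hle : I ≤ 𝓛 ^ d := h4 ▸ Ideal.pow_le_pow_right (by omega)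
    have e := DoubleQuot.quotQuotEquivQuotOfLE hle
    rw [Nat.card_congr e.toEquiv]
    have h := Ideal.absNorm_apply (𝓛 ^ d)
    rw [Submodule.cardQuot_apply] at h
    rw [← h, map_pow, habsL]
  have hfin := Submodule.card_eq_card_quotient_mul_card J'
  rw [hcardQ, hquot, two_mul, pow_add] at hfin
  exact Nat.eq_of_mul_eq_mul_right (pow_pos (by norm_num : (0:ℕ) < 2) d) hfin.symm
end

section
/- Let K be a totally real number field of degree d over ℚ in which 2 is totally ramified, with 𝓛 the maximal ideal of O_K above 2. Then the 2-torsion subgroup G[2] = {z ∈ G : z² = 1} of the group G = (O_K/4O_K)ˣ is isomorphic to the additive group 2O_K/4O_K, via the map sending a = 1 + x + 4O_K (with x ∈ 𝓛) to x + 4O_K; in particular G[2] has order 2^d. -/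
set_option synthInstance.maxHeartbeats 1000000
open NumberField IsDedekindDomain

set_option maxHeartbeats 2000000

lemma kraus_aux1 {R : Type*} [CommRing R] (x : R) : 1 + (x - 1) = x := by ring
lemma kraus_aux2 {R : Type*} [CommRing R] (x : R) : (1 + x) - 1 = x := by ring
lemma kraus_aux3 {R : Type*} [CommRing R] (a b : R) (h0 : (a - 1) * (b - 1) = 0) :
    a * b - 1 = (a - 1) + (b - 1) := by linear_combination h0

lemma key_mem {K : Type*} [Field K] [NumberField K]
    (d : ℕ) (hd1 : 0 < d) (𝓛 : Ideal (𝓞 K)) (h𝓛 : 𝓛.IsMaximal)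
    (hram : Ideal.span {(2 : 𝓞 K)} = 𝓛 ^ d) (b : 𝓞 K)
    (hb : b * b + 2 * b ∈ Ideal.span {(4 : 𝓞 K)}) :
    b ∈ Ideal.span {(2 : 𝓞 K)} := by
  rcases eq_or_ne b 0 with rfl | hbne
  · exact zero_mem _
  have h2ne : (2 : 𝓞 K) ≠ 0 := two_ne_zero
  have h𝓛ne : 𝓛 ≠ ⊥ := by
    intro h
    rw [h] at hram
    rw [show ((⊥ : Ideal (𝓞 K)) ^ d) = ⊥ by simpa using zero_pow (M₀ := Ideal (𝓞 K)) hd1.ne'] at hram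
    exact h2ne (by simpa [Ideal.span_singleton_eq_bot] using hram)
  set v : HeightOneSpectrum (𝓞 K) := ⟨𝓛, h𝓛.isPrime, h𝓛ne⟩ with hv
  set V := v.intValuation with hV
  have happly : ∀ r : 𝓞 K, V r = v.intValuationDef r := fun r => rfl
  have hle : ∀ (r : 𝓞 K) (n : ℕ),
      V r ≤ Multiplicative.ofAdd (-(n : ℤ)) ↔ r ∈ 𝓛 ^ n := by
    intro r n
    exact (v.intValuation_le_pow_iff_dvd r n).trans Ideal.dvd_span_singleton
  have hspan4 : Ideal.span {(4 : 𝓞 K)} = 𝓛 ^ (2 * d) := by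
    rw [show (4 : 𝓞 K) = 2 * 2 by norm_num, ← Ideal.span_singleton_mul_span_singleton,
      hram, ← pow_add, two_mul]
  have hsum : V (b * b + 2 * b) ≤ Multiplicative.ofAdd (-(2 * d : ℕ) : ℤ) := by
    rw [hle]; rw [hspan4] at hb; exact hb
  have h2 : V 2 ≤ Multiplicative.ofAdd (-(d : ℕ) : ℤ) := by
    rw [hle, ← hram]; exact Ideal.mem_span_singleton_self 2
  rw [hram, ← hle b d]
  by_contra hlt
  push_neg at hlt
  have hbne0 : V b ≠ 0 := v.intValuation_ne_zero b hbne
  have h2lt : V 2 < V b := lt_of_le_of_lt h2 hlt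
  have hlt2 : V (2 * b) < V (b * b) := by
    rw [map_mul, map_mul, mul_comm (V 2) (V b)]
    exact mul_lt_mul_of_le_of_lt_of_nonneg_of_pos le_rfl h2lt zero_le' (zero_lt_iff.2 hbne0)
  have hco : ((Multiplicative.ofAdd (-(2 * d : ℕ) : ℤ) : Multiplicative ℤ) : WithZero (Multiplicative ℤ))
      = (Multiplicative.ofAdd (-(d : ℕ) : ℤ) : Multiplicative ℤ)
        * (Multiplicative.ofAdd (-(d : ℕ) : ℤ) : Multiplicative ℤ) := by
    rw [← WithZero.coe_mul, WithZero.coe_inj, ← ofAdd_add]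
    congr 1
    push_cast
    ring
  have hlow : ((Multiplicative.ofAdd (-(2 * d : ℕ) : ℤ) : Multiplicative ℤ) : WithZero (Multiplicative ℤ)) < V (b * b) := by
    rw [map_mul, hco]
    exact mul_lt_mul'' hlt hlt zero_le' zero_le'
  have heq : V (b * b + 2 * b) = V (b * b) := by
    rw [Valuation.map_add_of_distinct_val V hlt2.ne', max_eq_left hlt2.le]
  rw [heq] at hsum
  exact absurd hsum (not_le.2 hlow)


/-- The quotient ring `𝓞 K / 4𝓞 K`. -/
abbrev OModFour (K : Type*) [Field K] [NumberField K] : Type _ :=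
  (𝓞 K) ⧸ Ideal.span {(4 : 𝓞 K)}

/-- The `2`-torsion set `G[2]` of the unit group `G = (𝓞 K / 4𝓞 K)ˣ`. -/
abbrev OModFourUnitsTwoTorsion (K : Type*) [Field K] [NumberField K] : Type _ :=
  {z : (OModFour K)ˣ // z * z = 1}

/-- The image `2𝓞 K / 4𝓞 K` of `2𝓞 K` in `𝓞 K / 4𝓞 K`, as a subtype. -/
abbrev TwoOModFour (K : Type*) [Field K] [NumberField K] : Type _ :=
  {y : OModFour K //
    y ∈ Ideal.map (Ideal.Quotient.mk (Ideal.span {(4 : 𝓞 K)})) (Ideal.span {(2 : 𝓞 K)})}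

/-- **The key step in the proof of Lemma 18 of Kraus' paper.**
Let `K` be a totally real number field of degree `d` over `ℚ` in which `2` is totally
ramified, with `𝓛` the maximal ideal of `𝓞 K` above `2`.  Then the `2`-torsion
subgroup `G[2] = {z : G | z² = 1}` of `G = (𝓞 K / 4𝓞 K)ˣ` is isomorphic to the
additive group `2𝓞 K / 4𝓞 K`, via the map sending `a = 1 + x + 4𝓞 K` to `x + 4𝓞 K`
(equivalently, an equivalence `e` with `a = 1 + e a` which carries multiplication to
addition); in particular `G[2]` has order `2 ^ d`. -/
theorem two_torsion_of_units_quotient_four_iso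
    (K : Type*) [Field K] [NumberField K]
    (htotreal : ∀ φ : K →+* ℂ, ∀ x : K, (φ x).im = 0)
    (d : ℕ) (hd : d = Module.finrank ℚ K)
    (𝓛 : Ideal (𝓞 K)) (h𝓛 : 𝓛.IsMaximal)
    (hram : Ideal.span {(2 : 𝓞 K)} = 𝓛 ^ d) :
    (∃ e : OModFourUnitsTwoTorsion K ≃ TwoOModFour K,
      (∀ z : OModFourUnitsTwoTorsion K,
        ((z.val : (OModFour K)ˣ) : OModFour K) = 1 + (e z).val) ∧
      (∀ z w zw : OModFourUnitsTwoTorsion K, z.val * w.val = zw.val →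
        (e zw).val = (e z).val + (e w).val))
    ∧ Nat.card (OModFourUnitsTwoTorsion K) = 2 ^ d := by
  have hd1 : 0 < d := hd ▸ Module.finrank_pos
  set mk := Ideal.Quotient.mk (Ideal.span {(4 : 𝓞 K)}) with hmk
  set M : Ideal (OModFour K) := Ideal.map mk (Ideal.span {(2 : 𝓞 K)}) with hM
  have hmk4 : mk 4 = 0 := Ideal.Quotient.eq_zero_iff_mem.2 (Ideal.mem_span_singleton_self 4)
  have hMspan : M = Ideal.span {mk 2} := by rw [hM, Ideal.map_span, Set.image_singleton]
  have hmul0 : ∀ x y : OModFour K, x ∈ M → y ∈ M → x * y = 0 := by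
    intro x y hx hy
    rw [hMspan, Ideal.mem_span_singleton'] at hx hy
    obtain ⟨c, rfl⟩ := hx
    obtain ⟨c', rfl⟩ := hy
    have h22 : mk 2 * mk 2 = 0 := by rw [← map_mul]; norm_num [hmk4]
    calc c * mk 2 * (c' * mk 2) = c * c' * (mk 2 * mk 2) := by ring
    _ = 0 := by rw [h22, mul_zero]
  have hfwd : ∀ z : (OModFour K)ˣ, z * z = 1 → ((z : OModFour K) - 1) ∈ M := by
    intro z hz
    obtain ⟨a, ha⟩ := Ideal.Quotient.mk_surjective (I := Ideal.span {(4 : 𝓞 K)}) (z : OModFour K)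
    have hzz : (z : OModFour K) * z = 1 := by
      rw [← Units.val_mul, hz, Units.val_one]
    have hmem : a * a - 1 ∈ Ideal.span {(4 : 𝓞 K)} := by
      rw [← Ideal.Quotient.eq_zero_iff_mem]
      push_cast [map_sub, map_mul, map_one, ha]
      rw [hzz]; ring
    have hb : (a - 1) * (a - 1) + 2 * (a - 1) ∈ Ideal.span {(4 : 𝓞 K)} := by
      have heq : (a - 1) * (a - 1) + 2 * (a - 1) = a * a - 1 := by ring
      rw [heq]; exact hmem
    have hkey := key_mem d hd1 𝓛 h𝓛 hram (a - 1) hb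
    have h2 : (z : OModFour K) - 1 = mk (a - 1) := by rw [map_sub, ha, map_one]
    rw [h2]
    exact Ideal.mem_map_of_mem mk hkey
  have hsq : ∀ y : OModFour K, y ∈ M → (1 + y) * (1 + y) = 1 := by
    intro y hy
    have h2y : (2 : OModFour K) * y = 0 := by
      apply hmul0 _ _ _ hy
      rw [hMspan]
      have h2mk : (2 : OModFour K) = mk 2 := (map_ofNat mk 2).symm
      rw [h2mk]
      exact Ideal.mem_span_singleton_self _
    have hyy : y * y = 0 := hmul0 y y hy hy
    calc (1 + y) * (1 + y) = 1 + (2 * y + y * y) := by ring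
    _ = 1 := by rw [h2y, hyy]; ring
  -- the equivalence
  refine ⟨⟨⟨fun z => ⟨(z.val : OModFour K) - 1, hfwd _ z.prop⟩,
      fun y => ⟨⟨1 + y.val, 1 + y.val, hsq _ y.prop, hsq _ y.prop⟩,
        Units.ext (hsq _ y.prop)⟩, ?_, ?_⟩, ?_, ?_⟩, ?_⟩
  · intro z
    apply Subtype.ext; apply Units.ext
    exact kraus_aux1 ((z.val : (OModFour K)ˣ) : OModFour K)
  · intro y
    apply Subtype.ext
    exact kraus_aux2 y.val
  · intro z
    exact (kraus_aux1 ((z.val : (OModFour K)ˣ) : OModFour K)).symm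
  · intro z w zw h
    have hv : ((zw.val : (OModFour K)ˣ) : OModFour K)
        = ((z.val : (OModFour K)ˣ) : OModFour K) * ((w.val : (OModFour K)ˣ) : OModFour K) := by
      rw [← Units.val_mul, h]
    have h0 := hmul0 _ _ (hfwd _ z.prop) (hfwd _ w.prop)
    simp only [Equiv.coe_fn_mk]
    rw [hv]
    exact kraus_aux3 _ _ h0
  · -- cardinality
    have e : OModFourUnitsTwoTorsion K ≃ TwoOModFour K := by
      refine ⟨fun z => ⟨(z.val : OModFour K) - 1, hfwd _ z.prop⟩,
        fun y => ⟨⟨1 + y.val, 1 + y.val, hsq _ y.prop, hsq _ y.prop⟩,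
          Units.ext (hsq _ y.prop)⟩, ?_, ?_⟩
      · intro z
        apply Subtype.ext; apply Units.ext
        exact kraus_aux1 ((z.val : (OModFour K)ˣ) : OModFour K)
      · intro y
        apply Subtype.ext
        exact kraus_aux2 y.val
    rw [Nat.card_congr e]
    set f : (𝓞 K) →ₗ[𝓞 K] OModFour K := (2 : 𝓞 K) • (Ideal.span {(4 : 𝓞 K)}).mkQ with hfdef
    have hf : ∀ a : 𝓞 K, f a = mk (2 * a) := by
      intro a
      rw [hfdef, LinearMap.smul_apply, Submodule.mkQ_apply, ← Submodule.Quotient.mk_smul,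
        smul_eq_mul]
      rfl
    have hrange : ∀ y : OModFour K,
        y ∈ Ideal.map mk (Ideal.span {(2 : 𝓞 K)}) ↔ y ∈ LinearMap.range f := by
      intro y
      rw [← hM, hMspan, Ideal.mem_span_singleton']
      constructor
      · rintro ⟨c, rfl⟩
        obtain ⟨a, rfl⟩ := Ideal.Quotient.mk_surjective (I := Ideal.span {(4 : 𝓞 K)}) c
        exact ⟨a, by rw [hf, map_mul, mul_comm]⟩
      · rintro ⟨a, rfl⟩
        exact ⟨mk a, by rw [hf, map_mul, mul_comm]⟩
    have hker : LinearMap.ker f = Ideal.span {(2 : 𝓞 K)} := by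
      ext a
      rw [LinearMap.mem_ker, hf, Ideal.Quotient.eq_zero_iff_mem, Ideal.mem_span_singleton,
        Ideal.mem_span_singleton]
      constructor
      · rintro ⟨c, hc⟩
        refine ⟨c, mul_left_cancel₀ (two_ne_zero : (2 : 𝓞 K) ≠ 0) ?_⟩
        rw [hc]
        norm_num
        ring
      · rintro ⟨c, rfl⟩
        exact ⟨c, by ring⟩
    have e4 : TwoOModFour K ≃ ((𝓞 K) ⧸ Ideal.span {(2 : 𝓞 K)}) :=
      (Equiv.subtypeEquivRight hrange).trans
        ((f.quotKerEquivRange).toEquiv.symm.trans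
          (Submodule.quotEquivOfEq (LinearMap.ker f) (Ideal.span {(2 : 𝓞 K)}) hker).toEquiv)
    rw [Nat.card_congr e4]
    have habs : Nat.card ((𝓞 K) ⧸ Ideal.span {(2 : 𝓞 K)})
        = Ideal.absNorm (Ideal.span {(2 : 𝓞 K)}) := by
      rw [Ideal.absNorm_apply, Submodule.cardQuot_apply]
    rw [habs, Ideal.absNorm_span_singleton]
    have h2alg : (2 : 𝓞 K) = algebraMap ℤ (𝓞 K) 2 := by simp
    rw [h2alg, Algebra.norm_algebraMap_of_basis (Module.Free.chooseBasis ℤ (𝓞 K))]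
    rw [show Fintype.card (Module.Free.ChooseBasisIndex ℤ (𝓞 K)) = d from by
      rw [← Module.finrank_eq_card_chooseBasisIndex, NumberField.RingOfIntegers.rank, hd]]
    norm_num [Int.natAbs_pow]
end

section
/- Let K be a totally real number field of degree d over ℚ in which 2 is totally ramified. Then the following are equivalent: (1) the class number of K is 1 and the natural reduction homomorphism O_Kˣ → (O_K/4O_K)ˣ is surjective; (2) the class number of K is 1 and every unit of O_K which is congruent to a square modulo 4O_K is a square in O_K. -/
set_option synthInstance.maxHeartbeats 1000000
set_option maxHeartbeats 1000000
set_option linter.unusedVariables false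

open Function NumberField Module

section Helpers



theorem sq_core {U G : Type*} [CommGroup U] [CommGroup G] [Finite G] (f : U →* G)
    (hp : IsPGroup 2 G)
    (hcard : Nat.card (U ⧸ (powMonoidHom 2 : U →* U).range) =
             Nat.card (G ⧸ (powMonoidHom 2 : G →* G).range))
    (hfin : Finite (U ⧸ (powMonoidHom 2 : U →* U).range)) :
    Function.Surjective f ↔
      ∀ u : U, f u ∈ (powMonoidHom 2 : G →* G).range → u ∈ (powMonoidHom 2 : U →* U).range := by
  set sqU := (powMonoidHom 2 : U →* U).range with hsqU
  set sqG := (powMonoidHom 2 : G →* G).range with hsqG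
  have hle : sqU ≤ Subgroup.comap f sqG := by
    rintro x ⟨y, rfl⟩
    exact ⟨f y, by simp [powMonoidHom_apply, map_pow]⟩
  let ψ : U ⧸ sqU →* G ⧸ sqG := QuotientGroup.map sqU sqG f hle
  have hψmk : ∀ u : U, ψ (QuotientGroup.mk u) = QuotientGroup.mk (f u) := fun u => rfl
  constructor
  · intro hf u hu
    have hψs : Surjective ψ := by
      intro g
      obtain ⟨g', rfl⟩ := QuotientGroup.mk_surjective g
      obtain ⟨u', rfl⟩ := hf g'
      exact ⟨QuotientGroup.mk u', rfl⟩
    have hψb : Bijective ψ := (Nat.bijective_iff_surjective_and_card ψ).mpr ⟨hψs, hcard⟩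
    have h1 : ψ (QuotientGroup.mk u) = 1 := by
      rw [hψmk, QuotientGroup.eq_one_iff]; exact hu
    have := hψb.injective (h1.trans (map_one ψ).symm)
    rwa [QuotientGroup.eq_one_iff] at this
  · intro hsq
    have hψi : Injective ψ := by
      rw [injective_iff_map_eq_one]
      intro a ha
      obtain ⟨u, rfl⟩ := QuotientGroup.mk_surjective a
      rw [hψmk, QuotientGroup.eq_one_iff] at ha
      rw [QuotientGroup.eq_one_iff]
      exact hsq u ha
    have hψs : Surjective ψ := by
      have : Finite (G ⧸ sqG) := inferInstance
      exact ((Nat.bijective_iff_injective_and_card ψ).mpr ⟨hψi, hcard⟩).surjective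
    -- now show range f = ⊤ using that G is a 2-group
    have hQ : ∀ q : G ⧸ f.range, q = 1 := by
      have hsurj2 : Surjective (fun q : G ⧸ f.range => q ^ 2) := by
        intro q
        obtain ⟨g, rfl⟩ := QuotientGroup.mk_surjective q
        obtain ⟨a, ha⟩ := hψs (QuotientGroup.mk g)
        obtain ⟨u, rfl⟩ := QuotientGroup.mk_surjective a
        rw [hψmk] at ha
        have : (f u)⁻¹ * g ∈ sqG := QuotientGroup.eq.mp ha
        obtain ⟨h, hh⟩ := this
        refine ⟨QuotientGroup.mk h, ?_⟩
        have hg : g = f u * h ^ 2 := by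
          rw [powMonoidHom_apply] at hh
          rw [hh, mul_inv_cancel_left]
        show (QuotientGroup.mk h : G ⧸ f.range) ^ 2 = QuotientGroup.mk g
        have h1 : (QuotientGroup.mk (f u) : G ⧸ f.range) = 1 :=
          (QuotientGroup.eq_one_iff _).mpr ⟨u, rfl⟩
        rw [hg, QuotientGroup.mk_mul, h1, one_mul, QuotientGroup.mk_pow]
      have hinj2 : Injective (fun q : G ⧸ f.range => q ^ 2) :=
        Finite.injective_iff_surjective.mpr hsurj2
      have hpow : ∀ (k : ℕ) (q : G ⧸ f.range), q ^ 2 ^ k = 1 → q = 1 := by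
        intro k
        induction k with
        | zero => intro q h; simpa using h
        | succ k ih =>
          intro q h
          rw [pow_succ, pow_mul] at h
          have : q ^ 2 ^ k = 1 := by
            apply hinj2
            simpa using h
          exact ih q this
      intro q
      obtain ⟨k, hk⟩ := (hp.to_quotient f.range) q
      exact hpow k q hk
    intro g
    have : (QuotientGroup.mk g : G ⧸ f.range) = 1 := hQ _
    rwa [QuotientGroup.eq_one_iff] at this




-- key valuation lemma
theorem sq_mem_pow {R : Type*} [CommRing R] [IsDedekindDomain R]
    {L : Ideal R} (hL : L ≠ ⊥) (hLp : L.IsPrime) (y : R) (k : ℕ)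
    (h : y * y ∈ L ^ (2 * k + 1)) : y ∈ L ^ (k + 1) := by
  have hprime : Prime L := Ideal.prime_of_isPrime hL hLp
  have hdvd : L ^ (2 * k + 1) ∣ Ideal.span {y} * Ideal.span {y} := by
    rw [Ideal.dvd_iff_le, Ideal.span_singleton_mul_span_singleton,
      Ideal.span_singleton_le_iff_mem]
    exact h
  have hmul : (2 * k + 1 : ℕ∞) ≤
      emultiplicity L (Ideal.span {y}) + emultiplicity L (Ideal.span {y}) := by
    have := le_emultiplicity_of_pow_dvd hdvd
    rwa [emultiplicity_mul hprime] at this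
  have hk : (k + 1 : ℕ∞) ≤ emultiplicity L (Ideal.span {y}) := by
    by_contra hc
    push_neg at hc
    have hle : emultiplicity L (Ideal.span {y}) ≤ (k : ℕ∞) := by
      exact Order.le_of_lt_add_one (by exact_mod_cast hc)
    have : (2 * k + 1 : ℕ∞) ≤ (k : ℕ∞) + (k : ℕ∞) :=
      hmul.trans (add_le_add hle hle)
    rw [← Nat.cast_add] at this
    have := (Nat.cast_le (α := ℕ∞)).mp (by exact_mod_cast this)
    omega
  have := pow_dvd_of_le_emultiplicity hk
  rw [Ideal.dvd_iff_le, Ideal.span_singleton_le_iff_mem] at this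
  exact this

theorem mem_span_two {R : Type*} [CommRing R] [IsDedekindDomain R]
    {L : Ideal R} (hL : L ≠ ⊥) (hLp : L.IsPrime) {d : ℕ} (hd : 1 ≤ d)
    (h2 : Ideal.span {(2 : R)} = L ^ d) (y : R)
    (h : y * y + 2 * y ∈ Ideal.span {(4 : R)}) : y ∈ Ideal.span {(2 : R)} := by
  have h4 : Ideal.span {(4 : R)} = L ^ (2 * d) := by
    have : (4 : R) = 2 * 2 := by norm_num
    rw [this, ← Ideal.span_singleton_mul_span_singleton, h2, ← pow_add, two_mul]
  have key : ∀ k, k ≤ d → y ∈ L ^ k := by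
    intro k
    induction k with
    | zero => intro _; simp
    | succ k ih =>
      intro hkd
      have hyk : y ∈ L ^ k := ih (by omega)
      have h2y : 2 * y ∈ L ^ (d + k) := by
        rw [pow_add]
        exact Ideal.mul_mem_mul (h2 ▸ Ideal.mem_span_singleton_self 2) hyk
      have hyy : y * y ∈ L ^ (2 * k + 1) := by
        have e1 : y * y = (y * y + 2 * y) - 2 * y := by ring
        rw [e1]
        apply sub_mem
        · exact Ideal.pow_le_pow_right (by omega) (h4 ▸ h)
        · exact Ideal.pow_le_pow_right (by omega) h2y
      exact sq_mem_pow hL hLp y k hyy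
  rw [h2]
  exact key d le_rfl


variable {K : Type*} [Field K] [NumberField K]


variable {K : Type*} [Field K] [NumberField K]

theorem card_quot_span_two :
    Nat.card (𝓞 K ⧸ Ideal.span {(2 : 𝓞 K)}) = 2 ^ finrank ℚ K := by
  have h := Ideal.absNorm_span_singleton (2 : 𝓞 K)
  rw [Ideal.absNorm_apply, Submodule.cardQuot_apply] at h
  have h2 : (2 : 𝓞 K) = algebraMap ℤ (𝓞 K) 2 := by simp
  rw [h2] at h ⊢
  rw [Algebra.norm_algebraMap_of_basis (RingOfIntegers.basis K)] at h
  rw [h, ← Module.finrank_eq_card_chooseBasisIndex, RingOfIntegers.rank]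
  simp [Int.natAbs_pow]

theorem card_quot_L {d : ℕ} (hd : d = finrank ℚ K) (𝓛 : Ideal (𝓞 K))
    (hram : Ideal.span {(2 : 𝓞 K)} = 𝓛 ^ d) :
    Nat.card (𝓞 K ⧸ 𝓛) = 2 := by
  have hd1 : 1 ≤ d := hd ▸ finrank_pos
  have h1 : (Ideal.absNorm 𝓛) ^ d = 2 ^ d := by
    rw [← map_pow, ← hram, Ideal.absNorm_apply, Submodule.cardQuot_apply,
      card_quot_span_two, hd]
  have := Nat.pow_left_injective (n := d) (by omega) h1  -- maybe wrong orientation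
  rw [Ideal.absNorm_apply, Submodule.cardQuot_apply] at this
  exact this




theorem two_card_cases {α : Type*} (h : Nat.card α = 2) (a b c : α) (hab : a ≠ b) :
    c = a ∨ c = b := by
  obtain ⟨x, y, hxy, huniv⟩ := Nat.card_eq_two_iff.mp h
  have hm : ∀ z : α, z = x ∨ z = y := by
    intro z
    have : z ∈ ({x, y} : Set α) := huniv ▸ Set.mem_univ z
    simpa using this
  rcases hm a with ha | ha <;> rcases hm b with hb | hb <;> rcases hm c with hc | hc <;>
    simp_all




theorem units_isPGroup {d : ℕ} (hd : d = finrank ℚ K) (𝓛 : Ideal (𝓞 K))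
    (h𝓛 : 𝓛.IsMaximal) (hram : Ideal.span {(2 : 𝓞 K)} = 𝓛 ^ d) :
    IsPGroup 2 ((𝓞 K ⧸ Ideal.span {(4 : 𝓞 K)})ˣ) := by
  have hd1 : 1 ≤ d := hd ▸ finrank_pos
  have h4 : Ideal.span {(4 : 𝓞 K)} = 𝓛 ^ (2 * d) := by
    have : (4 : 𝓞 K) = 2 * 2 := by norm_num
    rw [this, ← Ideal.span_singleton_mul_span_singleton, hram, ← pow_add, two_mul]
  have hcardL : Nat.card (𝓞 K ⧸ 𝓛) = 2 := card_quot_L (K := K) hd 𝓛 hram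
  have h4L : Ideal.span {(4 : 𝓞 K)} ≤ 𝓛 := by
    rw [h4]; exact Ideal.pow_le_self (by omega)
  intro g
  refine ⟨2 * d - 1, ?_⟩
  obtain ⟨x, hx⟩ := Ideal.Quotient.mk_surjective (g : 𝓞 K ⧸ Ideal.span {(4 : 𝓞 K)})
  -- x is not in 𝓛
  have hxL : x ∉ 𝓛 := by
    intro hmem
    obtain ⟨z, hz⟩ := Ideal.Quotient.mk_surjective ((g⁻¹ : _ˣ) : 𝓞 K ⧸ Ideal.span {(4 : 𝓞 K)})
    have : Ideal.Quotient.mk (Ideal.span {(4 : 𝓞 K)}) (x * z) = 1 := by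
      rw [map_mul, hx, hz]
      exact_mod_cast g.mul_inv
    have h1m : x * z - 1 ∈ Ideal.span {(4 : 𝓞 K)} := by
      rw [← Ideal.Quotient.eq]
      simpa using this
    have : (1 : 𝓞 K) ∈ 𝓛 := by
      have hxz : x * z ∈ 𝓛 := Ideal.mul_mem_right _ _ hmem
      have := 𝓛.sub_mem hxz (h4L h1m)
      simpa using this
    exact h𝓛.ne_top (𝓛.eq_top_of_isUnit_mem this isUnit_one)
  -- hence x ≡ 1 mod 𝓛
  have hx1 : x - 1 ∈ 𝓛 := by
    set q : 𝓞 K ⧸ 𝓛 := Ideal.Quotient.mk 𝓛 x with hq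
    have h01 : (0 : 𝓞 K ⧸ 𝓛) ≠ 1 := by
      have : Nontrivial (𝓞 K ⧸ 𝓛) := Ideal.Quotient.nontrivial_iff.mpr h𝓛.ne_top
      exact zero_ne_one
    have hq0 : q ≠ 0 := by
      rw [hq, Ne, Ideal.Quotient.eq_zero_iff_mem]
      exact hxL
    rcases two_card_cases hcardL (0 : 𝓞 K ⧸ 𝓛) 1 q h01 with h | h
    · exact absurd h hq0
    · rw [← Ideal.Quotient.eq_zero_iff_mem, map_sub, map_one, ← hq, h, sub_self]
  -- induction: x ^ (2 ^ k) - 1 ∈ 𝓛 ^ (k + 1)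
  have key : ∀ k : ℕ, x ^ (2 ^ k) - 1 ∈ 𝓛 ^ (k + 1) := by
    intro k
    induction k with
    | zero => simpa using hx1
    | succ k ih =>
      have h2mem : (2 : 𝓞 K) ∈ 𝓛 ^ d := hram ▸ Ideal.mem_span_singleton_self 2
      have e1 : x ^ (2 ^ (k + 1)) - 1 =
          (x ^ (2 ^ k) - 1) * (x ^ (2 ^ k) - 1) + 2 * (x ^ (2 ^ k) - 1) := by
        rw [pow_succ, pow_mul]
        ring
      rw [e1]
      apply Ideal.add_mem
      · have : (x ^ (2 ^ k) - 1) * (x ^ (2 ^ k) - 1) ∈ 𝓛 ^ ((k + 1) + (k + 1)) := by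
          rw [pow_add]; exact Ideal.mul_mem_mul ih ih
        exact Ideal.pow_le_pow_right (by omega) this
      · have : 2 * (x ^ (2 ^ k) - 1) ∈ 𝓛 ^ (d + (k + 1)) := by
          rw [pow_add]; exact Ideal.mul_mem_mul h2mem ih
        exact Ideal.pow_le_pow_right (by omega) this
  have hfin : x ^ (2 ^ (2 * d - 1)) - 1 ∈ Ideal.span {(4 : 𝓞 K)} := by
    rw [h4]
    have := key (2 * d - 1)
    have he : 2 * d - 1 + 1 = 2 * d := by omega
    rwa [he] at this
  rw [← Units.val_eq_one, Units.val_pow_eq_pow_val, ← hx, ← map_pow,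
    ← sub_eq_zero, ← map_one (Ideal.Quotient.mk _), ← map_sub,
    Ideal.Quotient.eq_zero_iff_mem]
  exact hfin

theorem card_ker_sq {d : ℕ} (hd : d = finrank ℚ K) (𝓛 : Ideal (𝓞 K))
    (h𝓛 : 𝓛.IsMaximal) (hram : Ideal.span {(2 : 𝓞 K)} = 𝓛 ^ d) :
    Nat.card ((powMonoidHom 2 : (𝓞 K ⧸ Ideal.span {(4 : 𝓞 K)})ˣ →*
      (𝓞 K ⧸ Ideal.span {(4 : 𝓞 K)})ˣ).ker) = 2 ^ d := by
  have hd1 : 1 ≤ d := hd ▸ finrank_pos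
  set I4 := Ideal.span {(4 : 𝓞 K)} with hI4
  set I2 := Ideal.span {(2 : 𝓞 K)} with hI2
  have hmul1 : ∀ t : 𝓞 K, (Ideal.Quotient.mk I4 (1 + 2 * t)) *
      (Ideal.Quotient.mk I4 (1 + 2 * t)) = 1 := by
    intro t
    rw [← map_mul, ← map_one (Ideal.Quotient.mk I4), Ideal.Quotient.eq]
    exact Ideal.mem_span_singleton.mpr ⟨t + t * t, by ring⟩
  let υ : 𝓞 K → (𝓞 K ⧸ I4)ˣ := fun t =>
    Units.mkOfMulEqOne _ _ (hmul1 t)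
  have hυval : ∀ t, (υ t : 𝓞 K ⧸ I4) = Ideal.Quotient.mk I4 (1 + 2 * t) := fun t => rfl
  have hυker : ∀ t, υ t ∈ (powMonoidHom 2 : (𝓞 K ⧸ I4)ˣ →* (𝓞 K ⧸ I4)ˣ).ker := by
    intro t
    rw [MonoidHom.mem_ker, powMonoidHom_apply]
    ext
    rw [Units.val_pow_eq_pow_val, hυval, sq, hmul1, Units.val_one]
  let F : (𝓞 K ⧸ I2) → (powMonoidHom 2 : (𝓞 K ⧸ I4)ˣ →* (𝓞 K ⧸ I4)ˣ).ker :=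
    fun q => Quotient.liftOn' q (fun t => ⟨υ t, hυker t⟩) (by
      intro a b hab
      have hab' : Ideal.Quotient.mk I2 a = Ideal.Quotient.mk I2 b := Quotient.sound' hab
      rw [Ideal.Quotient.eq] at hab'
      obtain ⟨s, hs⟩ := Ideal.mem_span_singleton.mp hab'
      ext
      rw [hυval, hυval, Ideal.Quotient.eq]
      exact Ideal.mem_span_singleton.mpr ⟨s, by linear_combination 2 * hs⟩)
  have hFmk : ∀ t : 𝓞 K, F (Ideal.Quotient.mk I2 t) = ⟨υ t, hυker t⟩ := fun t => rfl
  have hFbij : Function.Bijective F := by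
    constructor
    · intro q q' h
      obtain ⟨t, rfl⟩ := Ideal.Quotient.mk_surjective q
      obtain ⟨t', rfl⟩ := Ideal.Quotient.mk_surjective q'
      rw [hFmk, hFmk] at h
      have h2' : υ t = υ t' := Subtype.ext_iff.mp h
      have : (υ t : 𝓞 K ⧸ I4) = (υ t' : 𝓞 K ⧸ I4) := congrArg Units.val h2'
      rw [hυval, hυval, Ideal.Quotient.eq] at this
      have h4 : (1 + 2 * t) - (1 + 2 * t') = 2 * t - 2 * t' := by ring
      rw [h4] at this
      obtain ⟨s, hs⟩ := Ideal.mem_span_singleton.mp this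
      rw [Ideal.Quotient.eq]
      refine Ideal.mem_span_singleton.mpr ⟨s, ?_⟩
      have h2 : (2 : 𝓞 K) ≠ 0 := two_ne_zero
      apply mul_left_cancel₀ h2
      linear_combination hs
    · rintro ⟨g, hg⟩
      obtain ⟨x, hx⟩ := Ideal.Quotient.mk_surjective (g : 𝓞 K ⧸ I4)
      rw [MonoidHom.mem_ker, powMonoidHom_apply] at hg
      have hx2 : (x - 1) * (x - 1) + 2 * (x - 1) ∈ I4 := by
        have : Ideal.Quotient.mk I4 (x * x) = 1 := by
          rw [map_mul, hx, ← Units.val_mul, ← sq, hg, Units.val_one]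
        rw [← map_one (Ideal.Quotient.mk I4), Ideal.Quotient.eq] at this
        have he : (x - 1) * (x - 1) + 2 * (x - 1) = x * x - 1 := by ring
        rw [he]
        exact this
      have hy : x - 1 ∈ I2 := mem_span_two (R := 𝓞 K)
        (fun hbot => by
          simp only [hbot] at hram
          have h20 : (2 : 𝓞 K) = 0 := by
            have hmem : (2 : 𝓞 K) ∈ I2 := Ideal.mem_span_singleton_self (2 : 𝓞 K)
            rw [hram, ← Ideal.zero_eq_bot, zero_pow (by omega : d ≠ 0),
              Ideal.zero_eq_bot] at hmem
            simpa using hmem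
          exact two_ne_zero h20)
        h𝓛.isPrime hd1 hram (x - 1) hx2
      obtain ⟨t, ht⟩ := Ideal.mem_span_singleton.mp hy
      refine ⟨Ideal.Quotient.mk I2 t, ?_⟩
      rw [hFmk]
      ext
      rw [hυval]
      show _ = (g : 𝓞 K ⧸ I4)
      rw [← hx]
      congr 1
      linear_combination -ht
  rw [← Nat.card_eq_of_bijective F hFbij, hI2, card_quot_span_two, hd]

theorem finite_quot4 : Finite (𝓞 K ⧸ Ideal.span {(4 : 𝓞 K)}) := by
  have h4 : (4 : 𝓞 K) ≠ 0 := by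
    intro h
    have : ((4 : ℕ) : 𝓞 K) = 0 := by exact_mod_cast h
    rw [Nat.cast_eq_zero] at this
    omega
  have : Finite (𝓞 K ⧸ Ideal.span {(4 : 𝓞 K)}) :=
    Ideal.finiteQuotientOfFreeOfNeBot _ (by
      rw [Ne, Ideal.span_singleton_eq_bot]; exact h4)
  exact this

theorem card_quot_sqG {d : ℕ} (hd : d = finrank ℚ K) (𝓛 : Ideal (𝓞 K))
    (h𝓛 : 𝓛.IsMaximal) (hram : Ideal.span {(2 : 𝓞 K)} = 𝓛 ^ d) :
    Nat.card ((𝓞 K ⧸ Ideal.span {(4 : 𝓞 K)})ˣ ⧸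
      (powMonoidHom 2 : (𝓞 K ⧸ Ideal.span {(4 : 𝓞 K)})ˣ →*
        (𝓞 K ⧸ Ideal.span {(4 : 𝓞 K)})ˣ).range) = 2 ^ d := by
  have : Finite (𝓞 K ⧸ Ideal.span {(4 : 𝓞 K)}) := finite_quot4 (K := K)
  set G := (𝓞 K ⧸ Ideal.span {(4 : 𝓞 K)})ˣ with hG
  set sq : G →* G := powMonoidHom 2 with hsq
  have h1 : Nat.card G = Nat.card (G ⧸ sq.range) * Nat.card sq.range :=
    Subgroup.card_eq_card_quotient_mul_card_subgroup sq.range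
  have h2 : Nat.card G = Nat.card (G ⧸ sq.ker) * Nat.card sq.ker :=
    Subgroup.card_eq_card_quotient_mul_card_subgroup sq.ker
  have h3 : Nat.card (G ⧸ sq.ker) = Nat.card sq.range :=
    Nat.card_congr (QuotientGroup.quotientKerEquivRange sq).toEquiv
  have h4 : Nat.card sq.ker = 2 ^ d := card_ker_sq hd 𝓛 h𝓛 hram
  have hpos : 0 < Nat.card sq.range := Nat.card_pos
  have : Nat.card (G ⧸ sq.range) * Nat.card sq.range =
      Nat.card sq.range * Nat.card sq.ker := by
    rw [← h1, h2, h3]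
  rw [h4, mul_comm (Nat.card ↥sq.range) (2 ^ d)] at this
  exact Nat.eq_of_mul_eq_mul_right hpos this




theorem torsion_sq_eq_one (htotreal : ∀ φ : K →+* ℂ, ∀ x : K, (φ x).im = 0)
    (ζ : (𝓞 K)ˣ) (hζ : ζ ∈ NumberField.Units.torsion K) : ζ ^ 2 = 1 := by
  obtain ⟨w⟩ : Nonempty (InfinitePlace K) := inferInstance
  have h1 : w (algebraMap (𝓞 K) K (ζ : 𝓞 K)) = 1 := (NumberField.Units.mem_torsion K).mp hζ w
  set c : ℂ := w.embedding (algebraMap (𝓞 K) K (ζ : 𝓞 K)) with hc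
  have him : c.im = 0 := htotreal _ _
  have habs : ‖c‖ = 1 := by
    rw [hc, NumberField.InfinitePlace.norm_embedding_eq]; exact h1
  have hre : c = (c.re : ℂ) := Complex.ext rfl (by simp [him])
  have hc2 : c ^ 2 = 1 := by
    rw [hre, ← Complex.ofReal_pow, sq]
    rw [hre, Complex.norm_real, Real.norm_eq_abs] at habs
    have : c.re * c.re = 1 := by
      have := abs_mul_abs_self c.re
      rw [habs] at this
      simpa using this.symm
    exact_mod_cast this
  have hK : ((algebraMap (𝓞 K) K (ζ : 𝓞 K))) ^ 2 = 1 := by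
    apply w.embedding.injective
    rw [map_pow, map_one]
    exact hc2
  have hO : ((ζ : 𝓞 K)) ^ 2 = 1 := by
    apply NumberField.RingOfIntegers.coe_injective
    rw [map_pow, map_one]
    exact hK
  ext
  rw [Units.val_pow_eq_pow_val, hO, Units.val_one]

theorem rank_add_one (htotreal : ∀ φ : K →+* ℂ, ∀ x : K, (φ x).im = 0) :
    NumberField.Units.rank K + 1 = finrank ℚ K := by
  classical
  have hcplx : NumberField.InfinitePlace.nrComplexPlaces K = 0 := by
    rw [Fintype.card_eq_zero_iff]
    refine ⟨fun w => ?_⟩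
    have hreal : NumberField.InfinitePlace.IsReal w.1 := by
      rw [NumberField.InfinitePlace.isReal_iff]
      rw [NumberField.ComplexEmbedding.isReal_iff]
      ext x
      exact Complex.conj_eq_iff_im.mpr (htotreal _ x)
    exact (NumberField.InfinitePlace.not_isReal_iff_isComplex.mpr w.2) hreal
  have h1 := NumberField.InfinitePlace.card_eq_nrRealPlaces_add_nrComplexPlaces K
  have h2 := NumberField.InfinitePlace.card_add_two_mul_card_eq_rank K
  have h3 : 1 ≤ finrank ℚ K := finrank_pos
  rw [NumberField.Units.rank]
  omega

theorem card_torsion_eq_two (htotreal : ∀ φ : K →+* ℂ, ∀ x : K, (φ x).im = 0) :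
    Nat.card (NumberField.Units.torsion K) = 2 := by
  have hne : ((1 : (𝓞 K)ˣ) : 𝓞 K) ≠ ((-1 : (𝓞 K)ˣ) : 𝓞 K) := by
    intro h
    rw [Units.val_one, Units.val_neg, Units.val_one] at h
    have h2 : (2 : 𝓞 K) = 0 := by linear_combination h
    exact two_ne_zero h2
  have hmem : (-1 : (𝓞 K)ˣ) ∈ NumberField.Units.torsion K := by
    rw [NumberField.Units.torsion, CommGroup.mem_torsion]
    exact isOfFinOrder_iff_pow_eq_one.mpr ⟨2, two_pos, by ext; simp⟩
  rw [Nat.card_eq_two_iff]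
  refine ⟨⟨1, one_mem _⟩, ⟨-1, hmem⟩, ?_, ?_⟩
  · intro h
    exact hne (congrArg (fun z : NumberField.Units.torsion K => ((z : (𝓞 K)ˣ) : 𝓞 K)) h)
  · rw [Set.eq_univ_iff_forall]
    intro x
    have hx2 : (x : (𝓞 K)ˣ) ^ 2 = 1 := torsion_sq_eq_one htotreal _ x.2
    have : ((x : (𝓞 K)ˣ) : 𝓞 K) * ((x : (𝓞 K)ˣ) : 𝓞 K) = 1 := by
      have := congrArg (Units.val) hx2
      rw [Units.val_pow_eq_pow_val, Units.val_one, sq] at this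
      exact this
    rcases mul_self_eq_one_iff.mp this with h | h
    · left
      apply Subtype.ext
      apply Units.ext
      exact h
    · right
      apply Subtype.ext
      apply Units.ext
      exact h


theorem map_sq_range {A B : Type*} [CommGroup A] [CommGroup B] (e : A ≃* B) :
    Subgroup.map e.toMonoidHom (powMonoidHom 2 : A →* A).range =
      (powMonoidHom 2 : B →* B).range := by
  ext b
  simp only [Subgroup.mem_map, MonoidHom.mem_range, powMonoidHom_apply]
  constructor
  · rintro ⟨a, ⟨c, rfl⟩, rfl⟩
    exact ⟨e c, by rw [map_pow]; rfl⟩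
  · rintro ⟨c, rfl⟩
    exact ⟨(e.symm c) ^ 2, ⟨e.symm c, rfl⟩, by
      show e _ = _
      rw [map_pow]
      simp⟩

theorem card_units_quot_sq (htotreal : ∀ φ : K →+* ℂ, ∀ x : K, (φ x).im = 0) :
    Nat.card ((𝓞 K)ˣ ⧸ (powMonoidHom 2 : (𝓞 K)ˣ →* (𝓞 K)ˣ).range) =
      2 ^ finrank ℚ K := by
  classical
  set r := NumberField.Units.rank K with hr
  set T := NumberField.Units.torsion K with hT
  -- the product group
  let H := T × Multiplicative (Fin r → ℤ)
  let Φ : H →* (𝓞 K)ˣ := {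
    toFun := fun p => (p.1 : (𝓞 K)ˣ) *
      ∏ i, NumberField.Units.fundSystem K i ^ (Multiplicative.toAdd p.2 i)
    map_one' := by simp
    map_mul' := by
      rintro ⟨a, m⟩ ⟨b, n⟩
      show (((a * b : T) : (𝓞 K)ˣ)) * ∏ i, NumberField.Units.fundSystem K i ^
          (Multiplicative.toAdd (m * n) i) = _
      simp only [toAdd_mul, Pi.add_apply, zpow_add, Finset.prod_mul_distrib, Subgroup.coe_mul]
      rw [mul_mul_mul_comm] }
  have hΦ : Function.Bijective Φ := by
    constructor
    · intro p q hpq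
      obtain ⟨y, hy, huniq⟩ := NumberField.Units.exist_unique_eq_mul_prod K (Φ q)
      have h1 := huniq (p.1, Multiplicative.toAdd p.2) (by rw [← hpq]; rfl)
      have h2 := huniq (q.1, Multiplicative.toAdd q.2) rfl
      have h3 := h1.trans h2.symm
      have hfst := congrArg Prod.fst h3
      have hsnd := congrArg Prod.snd h3
      exact Prod.ext hfst (Multiplicative.toAdd.injective hsnd)
    · intro x
      obtain ⟨⟨ζ, e⟩, h, _⟩ := NumberField.Units.exist_unique_eq_mul_prod K x
      exact ⟨(ζ, Multiplicative.ofAdd e), h.symm⟩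
  let e : H ≃* (𝓞 K)ˣ := MulEquiv.ofBijective Φ hΦ
  have hquot : Nat.card (H ⧸ (powMonoidHom 2 : H →* H).range) =
      Nat.card ((𝓞 K)ˣ ⧸ (powMonoidHom 2 : (𝓞 K)ˣ →* (𝓞 K)ˣ).range) :=
    Nat.card_congr (QuotientGroup.congr _ _ e (map_sq_range e)).toEquiv
  rw [← hquot]
  -- now compute the cardinality for the product group
  let m2 : (Fin r → ℤ) →+ (Fin r → ZMod 2) := {
    toFun := fun g i => ((g i : ℤ) : ZMod 2)
    map_zero' := by funext i; simp
    map_add' := by intro a b; funext i; push_cast; simp }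
  let ρ2 : Multiplicative (Fin r → ℤ) →* Multiplicative (Fin r → ZMod 2) :=
    AddMonoidHom.toMultiplicative m2
  let ρ : H →* T × Multiplicative (Fin r → ZMod 2) :=
    MonoidHom.prodMap (MonoidHom.id T) ρ2
  have hρsurj : Function.Surjective ρ := by
    rintro ⟨t, m⟩
    refine ⟨(t, Multiplicative.ofAdd fun i => (ZMod.cast (Multiplicative.toAdd m i) : ℤ)), ?_⟩
    refine Prod.ext rfl ?_
    apply Multiplicative.toAdd.injective
    funext i
    exact ZMod.intCast_zmod_cast (Multiplicative.toAdd m i)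
  have hker : ρ.ker = (powMonoidHom 2 : H →* H).range := by
    ext p
    constructor
    · intro hp
      rw [MonoidHom.mem_ker, Prod.ext_iff] at hp
      obtain ⟨hp1, hp2⟩ := hp
      have hdvd : ∀ i, 2 ∣ Multiplicative.toAdd p.2 i := by
        intro i
        have h := congrFun (congrArg Multiplicative.toAdd hp2) i
        have h' : (((Multiplicative.toAdd p.2) i : ℤ) : ZMod 2) = 0 := h
        exact (ZMod.intCast_zmod_eq_zero_iff_dvd _ 2).mp h'
      have hp1' : p.1 = 1 := hp1
      refine ⟨(p.1, Multiplicative.ofAdd fun i => Multiplicative.toAdd p.2 i / 2), ?_⟩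
      rw [powMonoidHom_apply]
      refine Prod.ext ?_ ?_
      · show p.1 ^ 2 = p.1
        rw [hp1', one_pow]
      · show (Multiplicative.ofAdd fun i => Multiplicative.toAdd p.2 i / 2) ^ 2 = p.2
        apply Multiplicative.toAdd.injective
        rw [toAdd_pow]
        funext i
        simp only [Pi.smul_apply, toAdd_ofAdd, smul_eq_mul]
        exact Int.mul_ediv_cancel' (hdvd i)
    · rintro ⟨q, rfl⟩
      rw [MonoidHom.mem_ker, powMonoidHom_apply]
      refine Prod.ext ?_ ?_
      · show (q.1 ^ 2 : T) = 1
        have h := torsion_sq_eq_one htotreal (q.1 : (𝓞 K)ˣ) q.1.2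
        exact Subtype.ext (by rw [SubmonoidClass.coe_pow]; exact h)
      · show ρ2 (q.2 ^ 2) = 1
        rw [map_pow]
        apply Multiplicative.toAdd.injective
        rw [toAdd_pow]
        funext i
        simp [two_smul, CharTwo.add_self_eq_zero]
  rw [← hker]
  have hq2 : Nat.card (H ⧸ ρ.ker) =
      Nat.card (↥T × Multiplicative (Fin r → ZMod 2)) :=
    Nat.card_congr (QuotientGroup.quotientKerEquivOfSurjective ρ hρsurj).toEquiv
  rw [hq2, Nat.card_prod]
  have hcardT : Nat.card T = 2 := card_torsion_eq_two htotreal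
  have hcardM : Nat.card (Multiplicative (Fin r → ZMod 2)) = 2 ^ r := by
    simp [Nat.card_eq_fintype_card]
  have hrd : r + 1 = finrank ℚ K := rank_add_one htotreal
  rw [hcardT, hcardM, ← hrd, pow_succ, mul_comm]

end Helpers


open NumberField

/-- **Lemma 19 of Kraus' paper (through Lemma 16).**
Let `K` be a totally real number field of degree `d` over `ℚ` in which `2` is totally
ramified.  The following are equivalent:
(1) the class number of `K` is `1` and the reduction map `(𝓞 K)ˣ → (𝓞 K / 4𝓞 K)ˣ` is
surjective (i.e. `K = K^{4𝓞 K}`);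
(2) the class number of `K` is `1` and every unit of `𝓞 K` congruent to a square
modulo `4𝓞 K` is a square in `𝓞 K`. -/
theorem class_number_one_and_units_surjective_iff_units_congruent_to_squares_are_squares
    (K : Type*) [Field K] [NumberField K]
    (htotreal : ∀ φ : K →+* ℂ, ∀ x : K, (φ x).im = 0)
    (d : ℕ) (hd : d = Module.finrank ℚ K)
    (𝓛 : Ideal (𝓞 K)) (h𝓛 : 𝓛.IsMaximal)
    (hram : Ideal.span {(2 : 𝓞 K)} = 𝓛 ^ d) :
    (NumberField.classNumber K = 1 ∧
      Function.Surjective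
        (Units.map (Ideal.Quotient.mk (Ideal.span {(4 : 𝓞 K)})).toMonoidHom :
          (𝓞 K)ˣ → ((𝓞 K) ⧸ Ideal.span {(4 : 𝓞 K)})ˣ))
    ↔
    (NumberField.classNumber K = 1 ∧
      ∀ u : (𝓞 K)ˣ,
        (∃ w : 𝓞 K, (u : 𝓞 K) - w ^ 2 ∈ Ideal.span {(4 : 𝓞 K)}) →
        ∃ w : 𝓞 K, (u : 𝓞 K) = w ^ 2) := by
  refine and_congr_right fun _ => ?_
  set I4 := Ideal.span {(4 : 𝓞 K)} with hI4
  set f : (𝓞 K)ˣ →* (𝓞 K ⧸ I4)ˣ :=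
    Units.map (Ideal.Quotient.mk I4).toMonoidHom with hf
  have : Finite (𝓞 K ⧸ I4) := finite_quot4 (K := K)
  have hp : IsPGroup 2 ((𝓞 K ⧸ I4)ˣ) := units_isPGroup hd 𝓛 h𝓛 hram
  have hcardG : Nat.card ((𝓞 K ⧸ I4)ˣ ⧸
      (powMonoidHom 2 : (𝓞 K ⧸ I4)ˣ →* (𝓞 K ⧸ I4)ˣ).range) = 2 ^ d :=
    card_quot_sqG hd 𝓛 h𝓛 hram
  have hcardU : Nat.card ((𝓞 K)ˣ ⧸
      (powMonoidHom 2 : (𝓞 K)ˣ →* (𝓞 K)ˣ).range) = 2 ^ d := by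
    rw [card_units_quot_sq htotreal, hd]
  have hfin : Finite ((𝓞 K)ˣ ⧸ (powMonoidHom 2 : (𝓞 K)ˣ →* (𝓞 K)ˣ).range) := by
    apply Nat.finite_of_card_ne_zero
    rw [hcardU]
    positivity
  have hc := sq_core f hp (by rw [hcardU, hcardG]) hfin
  rw [hc]
  -- translate membership conditions
  apply forall_congr'
  intro u
  have h1 : (∃ w : 𝓞 K, (u : 𝓞 K) - w ^ 2 ∈ I4) ↔
      f u ∈ (powMonoidHom 2 : (𝓞 K ⧸ I4)ˣ →* (𝓞 K ⧸ I4)ˣ).range := by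
    constructor
    · rintro ⟨w, hw⟩
      have hmk : (Ideal.Quotient.mk I4 w) ^ 2 = ((f u : (𝓞 K ⧸ I4)ˣ) : 𝓞 K ⧸ I4) := by
        rw [← map_pow]
        have : Ideal.Quotient.mk I4 ((u : 𝓞 K) - w ^ 2) = 0 :=
          Ideal.Quotient.eq_zero_iff_mem.mpr hw
        rw [map_sub] at this
        have := sub_eq_zero.mp this
        rw [← this]
        rfl
      have hunit : IsUnit (Ideal.Quotient.mk I4 w) := by
        apply IsUnit.of_mul_eq_one ((Ideal.Quotient.mk I4 w) * ((f u)⁻¹ : (𝓞 K ⧸ I4)ˣ))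
        rw [← mul_assoc, ← sq, hmk, Units.mul_inv]
      obtain ⟨v, hv⟩ := hunit
      refine ⟨v, ?_⟩
      ext
      rw [powMonoidHom_apply, Units.val_pow_eq_pow_val, hv]
      exact hmk
    · rintro ⟨v, hv⟩
      obtain ⟨w, hw⟩ := Ideal.Quotient.mk_surjective ((v : (𝓞 K ⧸ I4)ˣ) : 𝓞 K ⧸ I4)
      refine ⟨w, ?_⟩
      rw [← Ideal.Quotient.eq_zero_iff_mem, map_sub, map_pow, hw, sub_eq_zero]
      have := congrArg (fun z : (𝓞 K ⧸ I4)ˣ => (z : 𝓞 K ⧸ I4)) hv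
      rw [powMonoidHom_apply] at this
      simp only [Units.val_pow_eq_pow_val] at this
      rw [this]
      rfl
  have h2 : (∃ w : 𝓞 K, (u : 𝓞 K) = w ^ 2) ↔
      u ∈ (powMonoidHom 2 : (𝓞 K)ˣ →* (𝓞 K)ˣ).range := by
    constructor
    · rintro ⟨w, hw⟩
      have hunit : IsUnit w := by
        apply IsUnit.of_mul_eq_one (w * ((u⁻¹ : (𝓞 K)ˣ) : 𝓞 K))
        rw [← mul_assoc, ← sq, ← hw]
        exact_mod_cast u.mul_inv
      obtain ⟨v, hv⟩ := hunit
      refine ⟨v, ?_⟩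
      ext
      rw [powMonoidHom_apply, Units.val_pow_eq_pow_val, hv, ← hw]
    · rintro ⟨v, hv⟩
      refine ⟨(v : 𝓞 K), ?_⟩
      rw [← hv, powMonoidHom_apply, Units.val_pow_eq_pow_val]
  rw [h1, h2]
end
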